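/- Let φ : ℝ → ℝ → E → E (written φ(τ;t,x)) be a map on E = EuclideanSpace ℝ (Fin n) and β : ℝ≥0 × ℝ≥0 → ℝ≥0 a function with β(0,s) = 0 for all s, such that ‖φ(τ;t,x₁) − φ(τ;t,x₂)‖ ≤ β(‖x₁ − x₂‖, τ − t) for all x₁,x₂ ∈ E and τ ≥ t. Suppose that for each s ≥ 0 the map r ↦ β(r,s) has right derivative b(s) at r = 0. If for some τ ≥ t and x ∈ E the map z ↦ φ(τ;t,z) is differentiable at x with Fréchet derivative Dφ(τ;t,x), then ‖Dφ(τ;t,x) v‖ ≤ b(τ − t) ‖v‖ for every v ∈ E; in particular the operator norm of Dφ(τ;t,x) is at most b(τ − t). -/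

import Mathlib

open scoped NNReal
open Filter

noncomputable section

/-- The Euclidean state space. -/
abbrev E (n : ℕ) := EuclideanSpace ℝ (Fin n)

/-- If `‖φ(τ;t,x₁) − φ(τ;t,x₂)‖ ≤ β(‖x₁ − x₂‖, τ − t)` with `β(0,s) = 0`, the map
`r ↦ β(r,s)` has right derivative `b(s)` at `r = 0`, and `z ↦ φ(τ;t,z)` is
differentiable at `x` with Fréchet derivative `Dφ`, then `‖Dφ v‖ ≤ b(τ − t) ‖v‖`
for every `v`; in particular `‖Dφ‖ ≤ b(τ − t)`. -/
theorem deriv_bound_of_KL_estimate {n : ℕ} (φ : ℝ → ℝ → E n → E n)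
    (β : ℝ≥0 → ℝ≥0 → ℝ≥0) (b : ℝ≥0 → ℝ)
    (hβ0 : ∀ s, β 0 s = 0)
    (hβ : ∀ (t τ : ℝ) (x₁ x₂ : E n), t ≤ τ →
      ‖φ τ t x₁ - φ τ t x₂‖ ≤ (β ‖x₁ - x₂‖₊ (τ - t).toNNReal : ℝ))
    (hβ' : ∀ s : ℝ≥0,
      Tendsto (fun h : ℝ≥0 => ((β h s : ℝ) - (β 0 s : ℝ)) / (h : ℝ))
        (nhdsWithin 0 (Set.Ioi (0 : ℝ≥0))) (nhds (b s)))
    (t τ : ℝ) (hτ : t ≤ τ) (x : E n) (Dφ : E n →L[ℝ] E n)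
    (hDφ : HasFDerivAt (fun z => φ τ t z) Dφ x) :
    (∀ v : E n, ‖Dφ v‖ ≤ b (τ - t).toNNReal * ‖v‖) ∧ ‖Dφ‖ ≤ b (τ - t).toNNReal := by
  set s := (τ - t).toNNReal with hs
  -- the right derivative of a quotient of nonnegatives is nonnegative
  have hbnn : 0 ≤ b s := by
    refine ge_of_tendsto (hβ' s) ?_
    filter_upwards [self_mem_nhdsWithin] with h hh
    simp only [hβ0, NNReal.coe_zero, sub_zero]
    positivity
  have key : ∀ v : E n, ‖Dφ v‖ ≤ b s * ‖v‖ := by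
    intro v
    rcases eq_or_ne v 0 with rfl | hv
    · simp
    have hv' : (0:ℝ) < ‖v‖ := norm_pos_iff.mpr hv
    set c : ℝ≥0 := ‖v‖₊ with hc
    have hc0 : c ≠ 0 := by simpa [hc] using hv
    -- the one-dimensional slice
    have h1 : HasDerivAt (fun h : ℝ => x + h • v) v 0 := by
      simpa using ((hasDerivAt_id (0:ℝ)).smul_const v).const_add x
    have hg : HasDerivAt (fun h : ℝ => φ τ t (x + h • v)) (Dφ v) 0 := by
      have h2 : HasFDerivAt (fun z => φ τ t z) Dφ (x + (0:ℝ) • v) := by simpa using hDφ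
      exact h2.comp_hasDerivAt (0:ℝ) h1
    have hslope := (hasDerivAt_iff_tendsto_slope.mp hg).mono_left
      (nhdsWithin_mono 0 (by intro y hy; exact ne_of_gt hy : Set.Ioi (0:ℝ) ⊆ {(0:ℝ)}ᶜ))
    have hnorm : Tendsto (fun h : ℝ => ‖slope (fun h : ℝ => φ τ t (x + h • v)) 0 h‖)
        (nhdsWithin 0 (Set.Ioi (0:ℝ))) (nhds ‖Dφ v‖) := hslope.norm
    -- the limit of the bound
    have hmap : Tendsto (fun h : ℝ => h.toNNReal * c)
        (nhdsWithin 0 (Set.Ioi (0:ℝ))) (nhdsWithin 0 (Set.Ioi (0:ℝ≥0))) := by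
      apply tendsto_nhdsWithin_of_tendsto_nhds_of_eventually_within
      · have : Continuous (fun h : ℝ => h.toNNReal * c) :=
          continuous_real_toNNReal.mul continuous_const
        simpa using this.tendsto' 0 0 (by simp) |>.mono_left nhdsWithin_le_nhds
      · filter_upwards [self_mem_nhdsWithin] with h hh
        have : (0:ℝ) < h := hh
        exact Set.mem_Ioi.mpr (mul_pos (by simpa using this) (pos_iff_ne_zero.mpr hc0))
    have hB : Tendsto (fun h : ℝ => ((β (h.toNNReal * c) s : ℝ)) / h)
        (nhdsWithin 0 (Set.Ioi (0:ℝ))) (nhds (b s * ‖v‖)) := by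
      have comp := (hβ' s).comp hmap
      have := comp.mul_const ‖v‖
      refine this.congr' ?_
      filter_upwards [self_mem_nhdsWithin] with h hh
      have hh' : (0:ℝ) < h := hh
      have hcoe : ((h.toNNReal * c : ℝ≥0) : ℝ) = h * ‖v‖ := by
        simp [hc, Real.coe_toNNReal _ hh'.le, coe_nnnorm]
      simp only [Function.comp, hβ0, NNReal.coe_zero, sub_zero, hcoe]
      field_simp
    -- pointwise comparison
    refine le_of_tendsto_of_tendsto hnorm hB ?_
    filter_upwards [self_mem_nhdsWithin] with h hh
    have hh' : (0:ℝ) < h := hh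
    have hle := hβ t τ (x + h • v) (x + (0:ℝ) • v) hτ
    have hdist : ‖(x + h • v) - (x + (0:ℝ) • v)‖₊ = h.toNNReal * c := by
      have : (x + h • v) - (x + (0:ℝ) • v) = h • v := by
        simp
      rw [this, nnnorm_smul]
      congr 1
      ext
      simp [Real.coe_toNNReal _ hh'.le, abs_of_pos hh']
    have hslope_eq : ‖slope (fun h : ℝ => φ τ t (x + h • v)) 0 h‖
        = ‖φ τ t (x + h • v) - φ τ t (x + (0:ℝ) • v)‖ / h := by
      rw [slope_def_module, norm_smul]
      simp only [sub_zero, Real.norm_eq_abs, abs_inv, abs_of_pos hh']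
      rw [div_eq_inv_mul]
    rw [hslope_eq]
    rw [hdist] at hle
    gcongr
  exact ⟨key, Dφ.opNorm_le_bound hbnn key⟩
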